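/- arXiv:2206.11515 — 8 statements merged into one kernel-verified Lean document; each statement's English description precedes it below -/
import Mathlib

section
/- Let At be a finite set of atoms, Γ a set of propositional formulas over At, F a propositional formula over At, and X an interpretation. Then X is a stable model of Γ ∪ {¬F} if and only if X is a stable model of Γ and X does not satisfy F. (Integrity constraints do not affect the generation of stable models; they can only eliminate stable models generated by the rest of the program.) -/
open Filter

attribute [local instance] Classical.propDecidable

/-- Propositional formulas over atoms `At`, built from atoms and `⊥`
    using `∧`, `∨`, `→`. -/
inductive Formula (At : Type) where
  | bot  : Formula At
  | atom : At → Formula At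
  | and  : Formula At → Formula At → Formula At
  | or   : Formula At → Formula At → Formula At
  | imp  : Formula At → Formula At → Formula At

namespace Formula

variable {At : Type}

/-- `¬F` abbreviates `F → ⊥`. -/
def neg (F : Formula At) : Formula At := imp F bot

/-- Classical satisfaction of a formula by an interpretation `X ⊆ At`. -/
def sat (X : Finset At) : Formula At → Prop
  | bot => False
  | atom a => a ∈ X
  | and F G => sat X F ∧ sat X G
  | or F G => sat X F ∨ sat X G
  | imp F G => sat X F → sat X G

/-- The reduct `F^X`: every maximal subformula not satisfied by `X` is
    replaced by `⊥`. -/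
noncomputable def reduct (X : Finset At) : Formula At → Formula At
  | bot => bot
  | atom a => if sat X (atom a) then atom a else bot
  | and F G => if sat X (and F G) then and (reduct X F) (reduct X G) else bot
  | or F G => if sat X (or F G) then or (reduct X F) (reduct X G) else bot
  | imp F G => if sat X (imp F G) then imp (reduct X F) (reduct X G) else bot

end Formula

variable {At : Type}

/-- `X` satisfies every formula in `Γ`. -/
def SatAll (X : Finset At) (Γ : Set (Formula At)) : Prop := ∀ F ∈ Γ, F.sat X

/-- `X` is a stable model of `Γ` (Ferraris semantics): `X` satisfies `Γ` and no
    proper subset of `X` satisfies the reduct `Γ^X`. -/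
def IsStable (X : Finset At) (Γ : Set (Formula At)) : Prop :=
  SatAll X Γ ∧ ∀ Y : Finset At, Y ⊂ X → ¬ SatAll Y (Formula.reduct X '' Γ)

/-- Weak constraint `:~ F [w, l]`. -/
structure WeakConstraint (At : Type) where
  formula : Formula At
  weight : ℝ
  level : ℕ

/-- `Cost_Ω(X, l)`: sum of the weights `w` over all `:~ F [w, l]` in `Ω` at level `l`
    whose formula is satisfied by `X`. -/
noncomputable def Cost (Ω : Finset (WeakConstraint At)) (X : Finset At) (l : ℕ) : ℝ :=
  ∑ c ∈ Ω.filter (fun c => c.level = l ∧ c.formula.sat X), c.weight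

/-- `X` is an optimal stable model of `Γ ∪ Ω`. -/
def OptStable (Γ : Set (Formula At)) (Ω : Finset (WeakConstraint At)) (X : Finset At) : Prop :=
  IsStable X Γ ∧
    ¬ ∃ Y : Finset At, IsStable Y Γ ∧ ∃ l : ℕ,
        Cost Ω Y l < Cost Ω X l ∧ ∀ l' : ℕ, l < l' → Cost Ω Y l' = Cost Ω X l'

/-- A weight is either the symbolic infinite weight `α` or a real number. -/
inductive Weight where
  | alpha : Weight
  | soft : ℝ → Weight

/-- The real value of a weight when the real number `a` is substituted for `α`. -/
def Weight.val (a : ℝ) : Weight → ℝ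
  | .alpha => a
  | .soft w => w

/-- A weighted formula `w : F`. -/
structure WFormula (At : Type) where
  weight : Weight
  formula : Formula At

/-- A hard formula `α : F`. -/
def WFormula.isHard (p : WFormula At) : Prop := p.weight = Weight.alpha

/-- A soft formula `w : F` with `w` a real number. -/
def WFormula.isSoft (p : WFormula At) : Prop := ∃ w : ℝ, p.weight = Weight.soft w

/-- `hard(Π)`. -/
noncomputable def hardPart (P : Finset (WFormula At)) : Finset (WFormula At) :=
  P.filter (fun p => p.isHard)

/-- `soft(Π)`. -/
noncomputable def softPart (P : Finset (WFormula At)) : Finset (WFormula At) :=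
  P.filter (fun p => p.isSoft)

/-- `Π_X`: the weighted formulas of `Π` whose formula is satisfied by `X`. -/
noncomputable def satPart (P : Finset (WFormula At)) (X : Finset At) : Finset (WFormula At) :=
  P.filter (fun p => p.formula.sat X)

/-- `SSM(Π)`: the soft stable models of the LP^MLN program `Π`. -/
def SSM (P : Finset (WFormula At)) : Set (Finset At) :=
  { X | IsStable X (WFormula.formula '' (↑(satPart P X) : Set (WFormula At))) }

/-- `W_Π(X, a)`. -/
noncomputable def Wgt (P : Finset (WFormula At)) (X : Finset At) (a : ℝ) : ℝ :=
  if X ∈ SSM P then Real.exp (∑ p ∈ satPart P X, p.weight.val a) else 0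

/-- The quotient whose limit as `a → ∞` defines `P_Π(X)`. -/
noncomputable def ratio [Fintype At] (P : Finset (WFormula At)) (X : Finset At) (a : ℝ) : ℝ :=
  Wgt P X a / ∑ Y ∈ Finset.univ.filter (fun Y => Y ∈ SSM P), Wgt P Y a

/-- `SSM'(Π)`: soft stable models satisfying all hard formulas. -/
def SSM' (P : Finset (WFormula At)) : Set (Finset At) :=
  { X | X ∈ SSM P ∧ ∀ p ∈ P, p.isHard → p.formula.sat X }

/-- `W'_Π(X)` (alternative semantics). -/
noncomputable def Wgt' (P : Finset (WFormula At)) (X : Finset At) : ℝ :=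
  if X ∈ SSM' P then
    Real.exp (∑ p ∈ (softPart P).filter (fun p => p.formula.sat X), p.weight.val 0)
  else 0

/-- `P'_Π(X)` (alternative semantics). -/
noncomputable def Pr' [Fintype At] (P : Finset (WFormula At)) (X : Finset At) : ℝ :=
  Wgt' P X / ∑ Y : Finset At, Wgt' P Y

/-- A plingo program: hard formulas, soft integrity constraints (a real weight
    together with the constraint formula), and weak constraints. -/
structure PlingoProgram (At : Type) where
  hard : Finset (Formula At)
  soft : Finset (ℝ × Formula At)
  weak : Finset (WeakConstraint At)

/-- `OSM(Π)`: optimal stable models of `hard(Π) ∪ weak(Π)`. -/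
def OSM (P : PlingoProgram At) : Set (Finset At) :=
  { X | OptStable (↑P.hard) P.weak X }

/-- `W''_Π(X)`. -/
noncomputable def Wgt'' (P : PlingoProgram At) (X : Finset At) : ℝ :=
  if X ∈ OSM P then Real.exp (∑ p ∈ P.soft.filter (fun p => p.2.sat X), p.1) else 0

/-- `P''_Π(X)`. -/
noncomputable def Pr'' [Fintype At] (P : PlingoProgram At) (X : Finset At) : ℝ :=
  Wgt'' P X / ∑ Y ∈ Finset.univ.filter (fun Y => Y ∈ OSM P), Wgt'' P Y

lemma reduct_bot_of_not_sat {At : Type} (X : Finset At) :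
    ∀ F : Formula At, ¬ F.sat X → F.reduct X = Formula.bot := by
  intro F hF
  cases F with
  | bot => rfl
  | atom a => simp [Formula.reduct, if_neg hF]
  | and F G => simp [Formula.reduct, if_neg hF]
  | or F G => simp [Formula.reduct, if_neg hF]
  | imp F G => simp [Formula.reduct, if_neg hF]

/-- `X` is a stable model of `Γ ∪ {¬F}` iff `X` is a stable model of `Γ`
    and `X` does not satisfy `F`. -/
theorem stable_model_integrity_constraint {At : Type} [Fintype At]
    (Γ : Set (Formula At)) (F : Formula At) (X : Finset At) :
    IsStable X (Γ ∪ {F.neg}) ↔ IsStable X Γ ∧ ¬ F.sat X := by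
  constructor
  · rintro ⟨hs, hmin⟩
    have hF : ¬ F.sat X := hs F.neg (Or.inr rfl)
    refine ⟨⟨fun G hG => hs G (Or.inl hG), ?_⟩, hF⟩
    intro Y hY hsat
    apply hmin Y hY
    rintro G ⟨H, hH, rfl⟩
    rcases hH with hH | hH
    · exact hsat _ ⟨H, hH, rfl⟩
    · rcases hH with rfl
      have hsatneg : Formula.sat X (F.imp Formula.bot) := hF
      have : (Formula.neg F).reduct X = Formula.imp Formula.bot Formula.bot := by
        simp [Formula.neg, Formula.reduct, if_pos hsatneg, reduct_bot_of_not_sat X F hF]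
      rw [this]
      exact fun h => h
  · rintro ⟨⟨hs, hmin⟩, hF⟩
    constructor
    · rintro G (hG | hG)
      · exact hs G hG
      · rcases hG with rfl; exact hF
    · intro Y hY hsat
      apply hmin Y hY
      rintro G ⟨H, hH, rfl⟩
      exact hsat _ ⟨H, Or.inl hH, rfl⟩
end

section
/- Let At be a finite set of atoms, Γ a finite set of propositional formulas over At, and X an interpretation. Then X is a stable model of the set of choice formulas {F ∨ ¬F : F ∈ Γ} if and only if X is a stable model of {F ∈ Γ : X ⊨ F}. -/
open Filter

attribute [local instance] Classical.propDecidable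

variable {At : Type}

lemma reduct_of_not_sat {At : Type} (X : Finset At) (F : Formula At)
    (h : ¬ F.sat X) : F.reduct X = Formula.bot := by
  cases F <;> simp only [Formula.reduct] <;> first | rfl | exact if_neg h

lemma sat_choice {At : Type} (X : Finset At) (F : Formula At) :
    (F.or F.neg).sat X := by
  by_cases h : F.sat X
  · exact Or.inl h
  · exact Or.inr h

lemma satall_reduct_iff {At : Type} (X Y : Finset At) (Γ : Finset (Formula At)) :
    SatAll Y (Formula.reduct X '' ((fun F : Formula At => F.or F.neg) '' ↑Γ)) ↔
      SatAll Y (Formula.reduct X '' ↑(Γ.filter (fun F => F.sat X))) := by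
  constructor
  · rintro H G ⟨F, hF, rfl⟩
    simp only [Finset.coe_filter, Set.mem_setOf_eq] at hF
    obtain ⟨hFΓ, hFX⟩ := hF
    have hnegbot : (Formula.neg F).reduct X = Formula.bot :=
      reduct_of_not_sat X _ (by intro h; exact h hFX)
    have := H ((F.or F.neg).reduct X) ⟨F.or F.neg, ⟨F, hFΓ, rfl⟩, rfl⟩
    rw [show (F.or F.neg).reduct X
        = (F.reduct X).or ((F.neg).reduct X) from if_pos (sat_choice X F)] at this
    rcases this with h | h
    · exact h
    · rw [hnegbot] at h; exact absurd (h) (by intro hb; exact hb)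
  · rintro H G ⟨G', ⟨F, hFΓ, rfl⟩, rfl⟩
    rw [show (F.or F.neg).reduct X
        = (F.reduct X).or ((F.neg).reduct X) from if_pos (sat_choice X F)]
    by_cases hFX : F.sat X
    · exact Or.inl (H (F.reduct X) ⟨F, by simp only [Finset.coe_filter, Set.mem_setOf_eq]; exact ⟨hFΓ, hFX⟩, rfl⟩)
    · have : (F.neg).reduct X = Formula.imp Formula.bot Formula.bot := by
        rw [show (F.neg).reduct X
            = Formula.imp (F.reduct X) (Formula.bot.reduct X) from if_pos hFX,
          reduct_of_not_sat X F hFX]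
        rfl
      rw [this]
      exact Or.inr (fun h => h)

/-- `X` is a stable model of the choice formulas `{F ∨ ¬F : F ∈ Γ}`
    iff `X` is a stable model of `{F ∈ Γ : X ⊨ F}`. -/
theorem stable_model_choice_formulas {At : Type} [Fintype At]
    (Γ : Finset (Formula At)) (X : Finset At) :
    IsStable X ((fun F : Formula At => F.or F.neg) '' ↑Γ) ↔
      IsStable X ↑(Γ.filter (fun F => F.sat X)) := by
  constructor
  · rintro ⟨_, hmin⟩
    refine ⟨?_, fun Y hY hsat => hmin Y hY ((satall_reduct_iff X Y Γ).mpr hsat)⟩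
    intro F hF
    simp only [Finset.coe_filter, Set.mem_setOf_eq] at hF
    exact hF.2
  · rintro ⟨_, hmin⟩
    refine ⟨fun G hG => ?_, fun Y hY hsat => hmin Y hY ((satall_reduct_iff X Y Γ).mp hsat)⟩
    obtain ⟨F, _, rfl⟩ := hG
    exact sat_choice X F
end

section
/- (Proposition 1) If Π is an LP^MLN program such that soft(Π) contains only soft integrity constraints (soft formulas of the form w : ¬F), then SSM'(Π) = SM(hard(Π) with weights dropped), i.e., the soft stable models of Π satisfying all hard formulas are exactly the stable models of the set of formulas of hard(Π) with weights dropped. -/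
open Filter

attribute [local instance] Classical.propDecidable

variable {At : Type}

lemma reduct_eq_bot {At : Type} {X : Finset At} {F : Formula At} (hF : ¬ F.sat X) :
    F.reduct X = Formula.bot := by
  cases F <;> simp [Formula.reduct, hF]

/-- Proposition 1: if `soft(Π)` contains only soft integrity
    constraints, then `SSM'(Π) = SM(hard(Π))` (weights dropped). -/
theorem ssm'_eq_sm_hard {At : Type} [Fintype At] (P : Finset (WFormula At))
    (h : ∀ p ∈ P, p.isSoft → ∃ F : Formula At, p.formula = F.neg) :
    SSM' P = { X | IsStable X (WFormula.formula '' (↑(hardPart P) : Set (WFormula At))) } := by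
  ext X
  constructor
  · rintro ⟨⟨hsat, hmin⟩, hhard⟩
    refine ⟨?_, ?_⟩
    · rintro G ⟨p, hp, rfl⟩
      obtain ⟨hp1, hp2⟩ := Finset.mem_filter.mp hp
      exact hhard p hp1 hp2
    · intro Y hY hYsat
      apply hmin Y hY
      rintro G ⟨F, ⟨p, hp, rfl⟩, rfl⟩
      obtain ⟨hp1, hp2⟩ := Finset.mem_filter.mp hp
      rcases hw : p.weight with _ | w
      · exact hYsat _ ⟨p.formula, ⟨p, Finset.mem_coe.mpr
          (Finset.mem_filter.mpr ⟨hp1, hw⟩), rfl⟩, rfl⟩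
      · obtain ⟨F, hF⟩ := h p hp1 ⟨w, hw⟩
        rw [hF] at hp2 ⊢
        have hnF : ¬ F.sat X := hp2
        simp [Formula.neg, Formula.reduct, Formula.sat, hnF, reduct_eq_bot hnF]
  · rintro ⟨hsat, hmin⟩
    have hh : ∀ p ∈ P, p.isHard → p.formula.sat X := fun p hp hph =>
      hsat _ ⟨p, Finset.mem_coe.mpr (Finset.mem_filter.mpr ⟨hp, hph⟩), rfl⟩
    refine ⟨⟨?_, ?_⟩, hh⟩
    · rintro G ⟨p, hp, rfl⟩
      exact (Finset.mem_filter.mp hp).2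
    · intro Y hY hYsat
      apply hmin Y hY
      rintro G ⟨F, ⟨p, hp, rfl⟩, rfl⟩
      obtain ⟨hp1, hp2⟩ := Finset.mem_filter.mp hp
      exact hYsat _ ⟨p.formula, ⟨p, Finset.mem_coe.mpr
        (Finset.mem_filter.mpr ⟨hp1, hh p hp1 hp2⟩), rfl⟩, rfl⟩
end

section
/- Let Γ be a finite set of propositional formulas over a finite set of atoms and Ω a finite set of weak constraints, and let Ω' = {:~ ¬F [−w, l] : (:~ F [w, l]) ∈ Ω}. Then the optimal stable models of Γ ∪ Ω coincide with the optimal stable models of Γ ∪ Ω'. (Replacing every weak constraint by its negated version with opposite weight at the same level shifts the cost of every stable model at each level by the same constant, hence preserves optimality.) -/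
open Filter

attribute [local instance] Classical.propDecidable

variable {At : Type}

lemma cost_neg_image {At : Type} (Ω : Finset (WeakConstraint At)) (X : Finset At) (l : ℕ) :
    Cost (Ω.image (fun c => ⟨c.formula.neg, -c.weight, c.level⟩ : WeakConstraint At → _)) X l
      = Cost Ω X l - ∑ c ∈ Ω.filter (fun c => c.level = l), c.weight := by
  classical
  have hinj : Function.Injective
      (fun c => ⟨c.formula.neg, -c.weight, c.level⟩ : WeakConstraint At → WeakConstraint At) := by
    rintro ⟨f1, w1, l1⟩ ⟨f2, w2, l2⟩ h
    simp only [WeakConstraint.mk.injEq, Formula.neg, Formula.imp.injEq, neg_inj] at h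
    obtain ⟨⟨hf, -⟩, hw, hl⟩ := h
    simp [hf, hw, hl]
  unfold Cost
  rw [Finset.filter_image, Finset.sum_image (fun a _ b _ h => hinj h)]
  have key : ∑ c ∈ Ω.filter (fun c =>
      ((fun c => (⟨c.formula.neg, -c.weight, c.level⟩ : WeakConstraint At)) c).level = l ∧
      Formula.sat X ((fun c => (⟨c.formula.neg, -c.weight, c.level⟩ : WeakConstraint At)) c).formula),
      ((fun c => (⟨c.formula.neg, -c.weight, c.level⟩ : WeakConstraint At)) c).weight
      = ∑ c ∈ Ω.filter (fun c => c.level = l ∧ ¬ Formula.sat X c.formula), (-c.weight) := by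
    apply Finset.sum_congr ?_ (fun _ _ => rfl)
    apply Finset.filter_congr
    intro c _
    simp [Formula.neg, Formula.sat]
  rw [key, Finset.sum_neg_distrib]
  have split := Finset.sum_filter_add_sum_filter_not
    (Ω.filter (fun c => c.level = l)) (fun c => Formula.sat X c.formula)
    (fun c => c.weight)
  rw [Finset.filter_filter, Finset.filter_filter] at split
  linarith [split]

/-- replacing every weak constraint `:~ F [w, l]` by `:~ ¬F [−w, l]`
    preserves the optimal stable models. -/
theorem opt_stable_negated_weak_constraints {At : Type} [Fintype At]
    (Γ : Finset (Formula At)) (Ω : Finset (WeakConstraint At)) (X : Finset At) :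
    OptStable ↑Γ Ω X ↔
      OptStable ↑Γ
        (Ω.image (fun c => ⟨c.formula.neg, -c.weight, c.level⟩ : WeakConstraint At → _)) X := by
  unfold OptStable
  apply and_congr_right
  intro _
  apply not_congr
  apply exists_congr; intro Y
  apply and_congr_right; intro _
  apply exists_congr; intro l
  have h1 := cost_neg_image Ω Y
  have h2 := cost_neg_image Ω X
  constructor
  · rintro ⟨hlt, heq⟩
    refine ⟨by rw [h1, h2]; linarith, fun l' hl' => by rw [h1, h2, heq l' hl']⟩
  · rintro ⟨hlt, heq⟩
    rw [h1, h2] at hlt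
    refine ⟨by linarith, fun l' hl' => ?_⟩
    have := heq l' hl'
    rw [h1, h2] at this
    linarith
end

section
/- (Proposition 3) Let Π be a plingo program and let τ₄(Π) be the plingo program consisting of hard(Π), the soft integrity constraints {−w : ¬F : (w : F) ∈ soft(Π)}, and the weak constraints {:~ ¬F [−w, l] : (:~ F [w, l]) ∈ weak(Π)}. Then for every interpretation X, P''_Π(X) and P''_{τ₄(Π)}(X) coincide; in particular OSM(Π) is nonempty if and only if OSM(τ₄(Π)) is nonempty, and when both probability functions are defined they are equal on every interpretation. -/
open Filter

attribute [local instance] Classical.propDecidable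

variable {At : Type}

/-- The negative translation `τ₄`: keep `hard(Π)`, replace every soft formula
    `w : F` by `−w : ¬F`, and every weak constraint `:~ F [w, l]` by `:~ ¬F [−w, l]`. -/
noncomputable def tau4 {At : Type} (P : PlingoProgram At) : PlingoProgram At where
  hard := P.hard
  soft := P.soft.image (fun p => (-p.1, p.2.neg))
  weak := P.weak.image (fun c => ⟨c.formula.neg, -c.weight, c.level⟩)

lemma neg_sat {At : Type} (X : Finset At) (F : Formula At) :
    (Formula.neg F).sat X ↔ ¬ F.sat X := Iff.rfl

lemma neg_inj' {At : Type} {F G : Formula At} (h : Formula.neg F = Formula.neg G) :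
    F = G := by
  simpa [Formula.neg] using h

lemma cost_tau4 {At : Type} (P : PlingoProgram At) (X : Finset At) (l : ℕ) :
    Cost (tau4 P).weak X l =
      Cost P.weak X l - ∑ c ∈ P.weak.filter (fun c => c.level = l), c.weight := by
  classical
  have hinj : ∀ a ∈ P.weak, ∀ b ∈ P.weak,
      (fun c : WeakConstraint At =>
        (⟨c.formula.neg, -c.weight, c.level⟩ : WeakConstraint At)) a =
      (fun c : WeakConstraint At =>
        (⟨c.formula.neg, -c.weight, c.level⟩ : WeakConstraint At)) b → a = b := by
    intro a _ b _ h
    simp only [WeakConstraint.mk.injEq, neg_inj] at h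
    obtain ⟨h1, h2, h3⟩ := h
    cases a; cases b
    simp only [WeakConstraint.mk.injEq]
    exact ⟨neg_inj' h1, h2, h3⟩
  simp only [Cost, tau4]
  rw [Finset.sum_filter, Finset.sum_filter, Finset.sum_filter,
    Finset.sum_image hinj, ← Finset.sum_sub_distrib]
  refine Finset.sum_congr rfl (fun c _ => ?_)
  by_cases hl : c.level = l
  · by_cases hs : c.formula.sat X
    · simp [hl, hs, neg_sat]
    · simp [hl, hs, neg_sat]
  · simp [hl]

lemma osm_tau4 {At : Type} (P : PlingoProgram At) : OSM (tau4 P) = OSM P := by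
  classical
  ext X
  have hh : ((tau4 P).hard : Set (Formula At)) = (P.hard : Set (Formula At)) := rfl
  simp only [OSM, Set.mem_setOf_eq, OptStable, hh, cost_tau4, sub_lt_sub_iff_right,
    sub_left_inj]

lemma wgt_tau4 {At : Type} (P : PlingoProgram At) (X : Finset At) :
    Wgt'' (tau4 P) X = Real.exp (-(∑ p ∈ P.soft, p.1)) * Wgt'' P X := by
  classical
  unfold Wgt''
  rw [osm_tau4]
  by_cases h : X ∈ OSM P
  · simp only [h, if_pos, if_true]
    rw [← Real.exp_add]
    congr 1
    have hinj : ∀ a ∈ P.soft, ∀ b ∈ P.soft,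
        (fun p : ℝ × Formula At => (-p.1, p.2.neg)) a =
        (fun p : ℝ × Formula At => (-p.1, p.2.neg)) b → a = b := by
      intro a _ b _ h
      simp only [Prod.mk.injEq, neg_inj] at h
      exact Prod.ext h.1 (neg_inj' h.2)
    simp only [tau4]
    rw [Finset.sum_filter, Finset.sum_filter, Finset.sum_image hinj,
      ← Finset.sum_neg_distrib, ← Finset.sum_add_distrib]
    refine Finset.sum_congr rfl (fun p _ => ?_)
    by_cases hs : p.2.sat X <;> simp [hs, neg_sat]
  · simp [h]

/-- Proposition 3: `P''_Π` and `P''_{τ₄(Π)}` coincide; in particular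
    `OSM(Π)` is nonempty iff `OSM(τ₄(Π))` is. -/
theorem plingo_tau4_probability {At : Type} [Fintype At] (P : PlingoProgram At) :
    ((OSM P).Nonempty ↔ (OSM (tau4 P)).Nonempty) ∧
      ∀ X : Finset At, Pr'' P X = Pr'' (tau4 P) X := by
  classical
  refine ⟨by rw [osm_tau4], fun X => ?_⟩
  simp only [Pr'', wgt_tau4, osm_tau4, ← Finset.mul_sum]
  rw [mul_div_mul_left _ _ (Real.exp_ne_zero _)]
end

section
/- (Proposition 2) Let Π be an LP^MLN program over a finite set of atoms with SSM(Π) ≠ ∅, and let τ₂(Π) be the plingo program with hard formulas {α : F ∨ ¬F : (w : F) ∈ Π}, soft integrity constraints {w : ¬¬F : (w : F) ∈ soft(Π)}, and weak constraints {:~ F [−1, 1] : (α : F) ∈ hard(Π)}. Then for every interpretation X, the limit defining P_Π(X) exists and P_Π(X) = P''_{τ₂(Π)}(X). -/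
open Filter

attribute [local instance] Classical.propDecidable

variable {At : Type}

/-- The translation `τ₂`: hard formulas `{α : F ∨ ¬F : (w : F) ∈ Π}`, soft integrity
    constraints `{w : ¬¬F : (w : F) ∈ soft(Π)}`, and weak constraints
    `{:~ F [−1, 1] : (α : F) ∈ hard(Π)}`. -/
noncomputable def tau2 {At : Type} (P : Finset (WFormula At)) : PlingoProgram At where
  hard := P.image (fun p => (p.formula).or p.formula.neg)
  soft := (softPart P).image (fun p => (p.weight.val 0, p.formula.neg.neg))
  weak := (hardPart P).image (fun p => ⟨p.formula, -1, 1⟩)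

section Aux

variable {At : Type}

lemma aux_reduct_bot_of_not_sat {X : Finset At} {F : Formula At} (h : ¬ F.sat X) :
    Formula.reduct X F = Formula.bot := by
  cases F <;> simp [Formula.reduct, h]

lemma aux_sat_neg_iff {X : Finset At} {F : Formula At} : F.neg.sat X ↔ ¬ F.sat X := by
  simp [Formula.neg, Formula.sat]

lemma aux_sat_negneg {X : Finset At} {F : Formula At} : F.neg.neg.sat X ↔ F.sat X := by
  simp [aux_sat_neg_iff, not_not]

lemma aux_sat_reduct_orneg {X Y : Finset At} (F : Formula At) :
    (Formula.reduct X (F.or F.neg)).sat Y ↔ (F.sat X → (Formula.reduct X F).sat Y) := by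
  by_cases hx : F.sat X
  · have hs : (F.or F.neg).sat X := Or.inl hx
    have hn : ¬ F.neg.sat X := by simp [aux_sat_neg_iff, hx]
    rw [show Formula.reduct X (F.or F.neg)
        = Formula.or (Formula.reduct X F) (Formula.reduct X F.neg) from by
      simp [Formula.reduct, hs], aux_reduct_bot_of_not_sat hn]
    simp [Formula.sat, hx]
  · have hn : F.neg.sat X := aux_sat_neg_iff.mpr hx
    have hs : (F.or F.neg).sat X := Or.inr hn
    have hb : Formula.reduct X F = Formula.bot := aux_reduct_bot_of_not_sat hx
    have hrn : Formula.reduct X F.neg = Formula.imp Formula.bot Formula.bot := by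
      rw [show Formula.reduct X F.neg
          = Formula.imp (Formula.reduct X F) (Formula.reduct X Formula.bot) from by
        simp only [Formula.neg]
        simp [Formula.reduct, show Formula.sat X (F.imp Formula.bot) from hn], hb]
      rfl
    rw [show Formula.reduct X (F.or F.neg)
        = Formula.or (Formula.reduct X F) (Formula.reduct X F.neg) from by
      simp [Formula.reduct, hs], hb, hrn]
    simp [Formula.sat, hx]

lemma aux_satall_reduct_iff (P : Finset (WFormula At)) (X Y : Finset At) :
    SatAll Y (Formula.reduct X '' ↑((tau2 P).hard)) ↔
      SatAll Y (Formula.reduct X '' (WFormula.formula '' (↑(satPart P X) : Set (WFormula At)))) := by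
  constructor
  · intro H G hG
    obtain ⟨G', hG', rfl⟩ := hG
    obtain ⟨p, hp, rfl⟩ := hG'
    rw [satPart, Finset.mem_coe, Finset.mem_filter] at hp
    have hor : (p.formula.or p.formula.neg) ∈ (Formula.reduct X '' ↑((tau2 P).hard) : Set _) ∨ True := Or.inr trivial
    have h1 : Formula.reduct X (p.formula.or p.formula.neg)
        ∈ (Formula.reduct X '' ↑((tau2 P).hard) : Set _) := by
      refine Set.mem_image_of_mem _ ?_
      rw [tau2, Finset.coe_image]
      exact Set.mem_image_of_mem _ hp.1
    have := H _ h1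
    exact (aux_sat_reduct_orneg p.formula).mp this hp.2
  · intro H G hG
    obtain ⟨G', hG', rfl⟩ := hG
    rw [tau2] at hG'
    simp only [Finset.coe_image, Set.mem_image, Finset.mem_coe] at hG'
    obtain ⟨p, hp, rfl⟩ := hG'
    rw [aux_sat_reduct_orneg]
    intro hsat
    refine H _ (Set.mem_image_of_mem _ (Set.mem_image_of_mem _ ?_))
    rw [satPart, Finset.mem_coe, Finset.mem_filter]
    exact ⟨hp, hsat⟩

lemma aux_stable_tau2_iff (P : Finset (WFormula At)) (X : Finset At) :
    IsStable X ↑((tau2 P).hard) ↔ X ∈ SSM P := by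
  constructor
  · rintro ⟨_, h2⟩
    refine ⟨?_, fun Y hY hall => h2 Y hY ((aux_satall_reduct_iff P X Y).mpr hall)⟩
    intro G hG
    obtain ⟨p, hp, rfl⟩ := hG
    rw [satPart, Finset.mem_coe, Finset.mem_filter] at hp
    exact hp.2
  · rintro ⟨_, h2⟩
    refine ⟨?_, fun Y hY hall => h2 Y hY ((aux_satall_reduct_iff P X Y).mp hall)⟩
    intro G hG
    rw [tau2] at hG
    simp only [Finset.coe_image, Set.mem_image, Finset.mem_coe] at hG
    obtain ⟨p, hp, rfl⟩ := hG
    by_cases hpf : p.formula.sat X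
    · exact Or.inl hpf
    · exact Or.inr (aux_sat_neg_iff.mpr hpf)

/-- Number of hard formulas of `P` satisfied by `X`. -/
noncomputable def kH (P : Finset (WFormula At)) (X : Finset At) : ℕ :=
  ((hardPart P).filter (fun p => p.formula.sat X)).card

/-- Sum of the weights of the soft formulas of `P` satisfied by `X`. -/
noncomputable def sS (P : Finset (WFormula At)) (X : Finset At) : ℝ :=
  ∑ p ∈ (softPart P).filter (fun p => p.formula.sat X), p.weight.val 0

lemma aux_not_hard_iff_soft (p : WFormula At) : ¬ p.isHard ↔ p.isSoft := by
  obtain ⟨w, f⟩ := p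
  cases w <;> simp [WFormula.isHard, WFormula.isSoft]

lemma aux_sum_val (P : Finset (WFormula At)) (X : Finset At) (a : ℝ) :
    ∑ p ∈ satPart P X, p.weight.val a = (kH P X : ℝ) * a + sS P X := by
  rw [← Finset.sum_filter_add_sum_filter_not (satPart P X) (fun p => p.isHard)]
  congr 1
  · have h1 : (satPart P X).filter (fun p => p.isHard)
        = (hardPart P).filter (fun p => p.formula.sat X) := by
      rw [satPart, hardPart, Finset.filter_filter, Finset.filter_filter]
      exact Finset.filter_congr fun p _ => by tauto
    rw [h1]
    rw [Finset.sum_congr rfl (fun p hp => ?_), Finset.sum_const, nsmul_eq_mul, kH]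
    have hp' := (Finset.mem_filter.mp ((Finset.mem_filter.mp hp).1)).2
    rw [WFormula.isHard] at hp'
    rw [hp']
    rfl
  · have h2 : (satPart P X).filter (fun p => ¬ p.isHard)
        = (softPart P).filter (fun p => p.formula.sat X) := by
      rw [satPart, softPart, Finset.filter_filter, Finset.filter_filter]
      exact Finset.filter_congr fun p _ => by
        rw [aux_not_hard_iff_soft]; tauto
    rw [h2, sS]
    refine Finset.sum_congr rfl fun p hp => ?_
    obtain ⟨w, hw⟩ := (Finset.mem_filter.mp ((Finset.mem_filter.mp hp).1)).2
    rw [hw]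
    rfl

lemma aux_Wgt_eq (P : Finset (WFormula At)) {X : Finset At} (hX : X ∈ SSM P) (a : ℝ) :
    Wgt P X a = Real.exp ((kH P X : ℝ) * a + sS P X) := by
  rw [Wgt, if_pos hX, aux_sum_val]

lemma aux_cost_tau2 (P : Finset (WFormula At)) (X : Finset At) (l : ℕ) :
    Cost (tau2 P).weak X l = if l = 1 then -(kH P X : ℝ) else 0 := by
  rw [Cost, tau2]
  rw [Finset.filter_image]
  rw [Finset.sum_image (f := fun c : WeakConstraint At => c.weight)
    (g := fun p : WFormula At => (⟨p.formula, -1, 1⟩ : WeakConstraint At))]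
  · by_cases hl : l = 1
    · subst hl
      rw [if_pos rfl]
      have : (hardPart P).filter
          (fun p => ((⟨p.formula, -1, 1⟩ : WeakConstraint At)).level = 1 ∧
            ((⟨p.formula, -1, 1⟩ : WeakConstraint At)).formula.sat X)
          = (hardPart P).filter (fun p => p.formula.sat X) := by
        exact Finset.filter_congr fun p _ => by simp
      rw [this, Finset.sum_const, nsmul_eq_mul, kH, mul_neg_one]
    · rw [if_neg hl]
      have : (hardPart P).filter
          (fun p => ((⟨p.formula, -1, 1⟩ : WeakConstraint At)).level = l ∧
            ((⟨p.formula, -1, 1⟩ : WeakConstraint At)).formula.sat X)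
          = ∅ := by
        refine Finset.filter_false_of_mem fun p _ => ?_
        simp only [not_and]
        intro hll
        exact absurd hll.symm hl
      rw [this, Finset.sum_empty]
  · intro p hp q hq hpq
    have hp' := (Finset.mem_filter.mp (Finset.mem_filter.mp hp).1).2
    have hq' := (Finset.mem_filter.mp (Finset.mem_filter.mp hq).1).2
    rw [WFormula.isHard] at hp' hq'
    obtain ⟨pw, pf⟩ := p; obtain ⟨qw, qf⟩ := q
    simp only [WeakConstraint.mk.injEq] at hpq
    simp_all

lemma aux_osm_tau2_iff (P : Finset (WFormula At)) (X : Finset At) :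
    X ∈ OSM (tau2 P) ↔ X ∈ SSM P ∧ ∀ Y, Y ∈ SSM P → kH P Y ≤ kH P X := by
  rw [OSM, Set.mem_setOf_eq, OptStable]
  constructor
  · rintro ⟨h1, h2⟩
    refine ⟨(aux_stable_tau2_iff P X).mp h1, fun Y hY => ?_⟩
    by_contra hlt
    push_neg at hlt
    refine h2 ⟨Y, (aux_stable_tau2_iff P Y).mpr hY, 1, ?_, ?_⟩
    · rw [aux_cost_tau2, aux_cost_tau2, if_pos rfl, if_pos rfl, neg_lt_neg_iff]
      exact_mod_cast hlt
    · intro l' hl'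
      rw [aux_cost_tau2, aux_cost_tau2, if_neg (by omega), if_neg (by omega)]
  · rintro ⟨hS, hmax⟩
    refine ⟨(aux_stable_tau2_iff P X).mpr hS, ?_⟩
    rintro ⟨Y, hY, l, hlt, -⟩
    have hYS := (aux_stable_tau2_iff P Y).mp hY
    rw [aux_cost_tau2, aux_cost_tau2] at hlt
    by_cases hl : l = 1
    · rw [if_pos hl, if_pos hl, neg_lt_neg_iff] at hlt
      exact absurd (hmax Y hYS) (by exact_mod_cast hlt.not_ge)
    · rw [if_neg hl, if_neg hl] at hlt
      exact lt_irrefl _ hlt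

lemma aux_wgt''_eq (P : Finset (WFormula At)) (X : Finset At) :
    Wgt'' (tau2 P) X = if X ∈ OSM (tau2 P) then Real.exp (sS P X) else 0 := by
  rw [Wgt'']
  by_cases hX : X ∈ OSM (tau2 P)
  · rw [if_pos hX, if_pos hX]
    congr 1
    rw [show (tau2 P).soft = (softPart P).image
        (fun p => (p.weight.val 0, p.formula.neg.neg)) from rfl]
    rw [Finset.filter_image]
    rw [Finset.sum_image (f := fun q : ℝ × Formula At => q.1)
      (g := fun p : WFormula At => (p.weight.val 0, p.formula.neg.neg))]
    · rw [sS]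
      refine Finset.sum_congr (Finset.filter_congr fun p _ => by
        simp [aux_sat_negneg]) fun p _ => rfl
    · intro p hp q hq hpq
      obtain ⟨pw', hp'⟩ := (Finset.mem_filter.mp (Finset.mem_filter.mp hp).1).2
      obtain ⟨qw', hq'⟩ := (Finset.mem_filter.mp (Finset.mem_filter.mp hq).1).2
      simp only [Prod.mk.injEq] at hpq
      obtain ⟨pw, pf⟩ := p; obtain ⟨qw, qf⟩ := q
      simp only at hp' hq'
      subst hp' hq'
      simp only [Weight.val, Formula.neg, Formula.imp.injEq, Formula.imp.injEq,
        and_true] at hpq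
      obtain ⟨h1, h2⟩ := hpq
      simp_all
  · rw [if_neg hX, if_neg hX]

lemma aux_exp_tendsto (K : ℕ) (c : ℕ) (s : ℝ) (hc : c ≤ K) :
    Filter.Tendsto (fun a : ℝ => Real.exp ((c : ℝ) * a + s) * Real.exp (-(K : ℝ) * a))
      atTop (nhds (if c = K then Real.exp s else 0)) := by
  have heq : (fun a : ℝ => Real.exp ((c : ℝ) * a + s) * Real.exp (-(K : ℝ) * a))
      = fun a => Real.exp (((c : ℝ) - (K : ℝ)) * a + s) := by
    funext a
    rw [← Real.exp_add]
    ring_nf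
  rw [heq]
  by_cases hck : c = K
  · subst hck
    simp only [sub_self, zero_mul, zero_add, if_pos rfl]
    exact tendsto_const_nhds
  · rw [if_neg hck]
    have hlt : (c : ℝ) - (K : ℝ) < 0 := by
      have : c < K := lt_of_le_of_ne hc hck
      have : (c : ℝ) < (K : ℝ) := by exact_mod_cast this
      linarith
    have h1 : Filter.Tendsto (fun a : ℝ => ((c : ℝ) - (K : ℝ)) * a) atTop atBot :=
      (tendsto_const_mul_atBot_of_neg hlt).mpr tendsto_id
    exact Real.tendsto_exp_atBot.comp (tendsto_atBot_add_const_right atTop s h1)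

end Aux

/-- Proposition 2: if `SSM(Π) ≠ ∅` then for every interpretation `X`
    the limit defining `P_Π(X)` exists and equals `P''_{τ₂(Π)}(X)`. -/
theorem lpmln_prob_eq_tau2_prob {At : Type} [Fintype At] (P : Finset (WFormula At))
    (h : (SSM P).Nonempty) (X : Finset At) :
    Tendsto (fun a : ℝ => ratio P X a) atTop (nhds (Pr'' (tau2 P) X)) := by
  classical
  set D := Finset.univ.filter (fun Y : Finset At => Y ∈ SSM P) with hDdef
  obtain ⟨Z, hZ⟩ := h
  have hD : D.Nonempty := ⟨Z, by simp [hDdef, hZ]⟩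
  have hmemD : ∀ Y, Y ∈ D ↔ Y ∈ SSM P := fun Y => by simp [hDdef]
  set K := D.sup (kH P) with hKdef
  obtain ⟨X₀, hX₀D, hX₀K⟩ := Finset.exists_mem_eq_sup D hD (kH P)
  have hle : ∀ Y ∈ SSM P, kH P Y ≤ K := fun Y hY => Finset.le_sup ((hmemD Y).mpr hY)
  have hOSM : ∀ Y, Y ∈ OSM (tau2 P) ↔ Y ∈ SSM P ∧ kH P Y = K := by
    intro Y
    rw [aux_osm_tau2_iff]
    constructor
    · rintro ⟨h1, h2⟩
      exact ⟨h1, le_antisymm (hle Y h1)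
        (by rw [hKdef, hX₀K]; exact h2 X₀ ((hmemD X₀).mp hX₀D))⟩
    · rintro ⟨h1, h2⟩
      exact ⟨h1, fun Z hZ' => h2 ▸ hle Z hZ'⟩
  set E := D.filter (fun Y => kH P Y = K) with hEdef
  have hEne : E.Nonempty := ⟨X₀, by simp [hEdef, hX₀D, hX₀K.symm]; exact hKdef.symm⟩
  set L := ∑ Y ∈ E, Real.exp (sS P Y) with hLdef
  have hLpos : 0 < L := Finset.sum_pos (fun Y _ => Real.exp_pos _) hEne
  have hEOSM : Finset.univ.filter (fun Y : Finset At => Y ∈ OSM (tau2 P)) = E := by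
    ext Y
    simp only [hEdef, hDdef, Finset.mem_filter, Finset.mem_univ, true_and, hOSM Y]
  have hden'' : ∑ Y ∈ Finset.univ.filter (fun Y : Finset At => Y ∈ OSM (tau2 P)),
      Wgt'' (tau2 P) Y = L := by
    rw [hEOSM, hLdef]
    refine Finset.sum_congr rfl fun Y hY => ?_
    rw [aux_wgt''_eq, if_pos]
    rw [hOSM Y]
    rw [hEdef, Finset.mem_filter] at hY
    exact ⟨(hmemD Y).mp hY.1, hY.2⟩
  have hPr : Pr'' (tau2 P) X = Wgt'' (tau2 P) X / L := by rw [Pr'', hden'']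
  -- numerator
  have hnum : Tendsto (fun a : ℝ => Wgt P X a * Real.exp (-(K : ℝ) * a)) atTop
      (nhds (Wgt'' (tau2 P) X)) := by
    by_cases hX : X ∈ SSM P
    · have heq : (fun a : ℝ => Wgt P X a * Real.exp (-(K : ℝ) * a))
          = fun a => Real.exp ((kH P X : ℝ) * a + sS P X) * Real.exp (-(K : ℝ) * a) :=
        funext fun a => by rw [aux_Wgt_eq P hX a]
      rw [heq]
      have hval : Wgt'' (tau2 P) X = if kH P X = K then Real.exp (sS P X) else 0 := by
        rw [aux_wgt''_eq]
        by_cases hk : kH P X = K <;> simp [hOSM, hX, hk]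
      rw [hval]
      exact aux_exp_tendsto K (kH P X) (sS P X) (hle X hX)
    · have h0 : (fun a : ℝ => Wgt P X a * Real.exp (-(K : ℝ) * a)) = fun _ => (0 : ℝ) :=
        funext fun a => by rw [Wgt, if_neg hX, zero_mul]
      have h0' : Wgt'' (tau2 P) X = 0 := by
        rw [aux_wgt''_eq, if_neg]
        rw [hOSM]
        tauto
      rw [h0, h0']
      exact tendsto_const_nhds
  -- denominator
  have hden : Tendsto (fun a : ℝ => (∑ Y ∈ D, Wgt P Y a) * Real.exp (-(K : ℝ) * a)) atTop
      (nhds L) := by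
    have heq : (fun a : ℝ => (∑ Y ∈ D, Wgt P Y a) * Real.exp (-(K : ℝ) * a))
        = fun a => ∑ Y ∈ D, Real.exp ((kH P Y : ℝ) * a + sS P Y) * Real.exp (-(K : ℝ) * a) := by
      funext a
      rw [Finset.sum_mul]
      exact Finset.sum_congr rfl fun Y hY => by rw [aux_Wgt_eq P ((hmemD Y).mp hY) a]
    rw [heq]
    have hL : L = ∑ Y ∈ D, (if kH P Y = K then Real.exp (sS P Y) else 0) := by
      rw [hLdef, hEdef, Finset.sum_filter]
    rw [hL]
    exact tendsto_finset_sum D fun Y hY =>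
      aux_exp_tendsto K (kH P Y) (sS P Y) (hle Y ((hmemD Y).mp hY))
  have hratio : (fun a : ℝ => ratio P X a)
      = fun a => (Wgt P X a * Real.exp (-(K : ℝ) * a))
          / ((∑ Y ∈ D, Wgt P Y a) * Real.exp (-(K : ℝ) * a)) := by
    funext a
    rw [mul_div_mul_right _ _ (Real.exp_ne_zero _)]
    rfl
  rw [hPr, hratio]
  exact hnum.div hden (ne_of_gt hLpos)
end

section
/- Let Π be an LP^MLN program over a finite set of atoms with SSM(Π) ≠ ∅. For every interpretation X, P_Π(X) ≠ 0 (X is a probabilistic stable model of Π) if and only if X ∈ SSM(Π) and the number of hard formulas of Π satisfied by X is maximal among the soft stable models, i.e., |hard(Π)_X| ≥ |hard(Π)_Y| for every Y ∈ SSM(Π). -/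
open Filter

attribute [local instance] Classical.propDecidable

variable {At : Type}

/-- if `SSM(Π) ≠ ∅`, then for every interpretation `X` the limit
    `P_Π(X)` exists, and `P_Π(X) ≠ 0` iff `X ∈ SSM(Π)` and `X` satisfies a maximal
    number of hard formulas of `Π` among the soft stable models. -/
theorem probabilistic_stable_model_iff {At : Type} [Fintype At] (P : Finset (WFormula At))
    (h : (SSM P).Nonempty) (X : Finset At) :
    ∃ p : ℝ, Tendsto (fun a : ℝ => ratio P X a) atTop (nhds p) ∧
      (p ≠ 0 ↔ X ∈ SSM P ∧ ∀ Y ∈ SSM P,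
        ((hardPart P).filter (fun q => q.formula.sat Y)).card ≤
          ((hardPart P).filter (fun q => q.formula.sat X)).card) := by
  classical
  set S : Finset (Finset At) := Finset.univ.filter (fun Y => Y ∈ SSM P) with hS
  have hmemS : ∀ Y : Finset At, Y ∈ S ↔ Y ∈ SSM P := by
    intro Y; simp [hS]
  obtain ⟨Z, hZ⟩ := h
  have hSne : S.Nonempty := ⟨Z, (hmemS Z).2 hZ⟩
  set n : Finset At → ℕ := fun Y => ((hardPart P).filter (fun q => q.formula.sat Y)).card
    with hn
  set c : Finset At → ℝ :=
    fun Y => ∑ p ∈ (satPart P Y).filter (fun p => ¬ p.isHard), p.weight.val 0 with hc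
  have hsum : ∀ (a : ℝ) (Y : Finset At),
      ∑ p ∈ satPart P Y, p.weight.val a = (n Y : ℝ) * a + c Y := by
    intro a Y
    rw [← Finset.sum_filter_add_sum_filter_not (satPart P Y) (fun p => p.isHard)]
    congr 1
    · have hcard : (satPart P Y).filter (fun p => p.isHard)
          = (hardPart P).filter (fun q => q.formula.sat Y) := by
        simp [satPart, hardPart, Finset.filter_filter, and_comm]
      have h1 : ∑ p ∈ (satPart P Y).filter (fun p => p.isHard), p.weight.val a
          = ∑ _p ∈ (satPart P Y).filter (fun p => p.isHard), a := by
        apply Finset.sum_congr rfl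
        intro p hp
        have hh : p.isHard := (Finset.mem_filter.mp hp).2
        rw [WFormula.isHard] at hh
        rw [hh]; rfl
      rw [h1, Finset.sum_const, hcard, nsmul_eq_mul]
    · apply Finset.sum_congr rfl
      intro p hp
      have hns : ¬ p.isHard := (Finset.mem_filter.mp hp).2
      rw [WFormula.isHard] at hns
      cases hw : p.weight with
      | alpha => exact absurd hw hns
      | soft w => rfl
  set N : ℕ := S.sup n with hN
  obtain ⟨Y0, hY0S, hY0⟩ := Finset.exists_mem_eq_sup S hSne n
  set lim : Finset At → ℝ := fun Y => if n Y = N then Real.exp (c Y) else 0 with hlimdef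
  set D : ℝ := ∑ Y ∈ S, lim Y with hD
  have hDpos : 0 < D := by
    apply Finset.sum_pos'
    · intro Y _
      simp only [hlimdef]
      split
      · positivity
      · exact le_rfl
    · refine ⟨Y0, hY0S, ?_⟩
      have hEq : n Y0 = N := hY0.symm
      simp [hlimdef, hEq, Real.exp_pos]
  have hlim : ∀ Y ∈ S,
      Tendsto (fun a : ℝ => Real.exp ((n Y : ℝ) * a + c Y) * Real.exp (-(N : ℝ) * a))
        atTop (nhds (lim Y)) := by
    intro Y hYS
    have hfun : (fun a : ℝ => Real.exp ((n Y : ℝ) * a + c Y) * Real.exp (-(N : ℝ) * a))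
        = fun a : ℝ => Real.exp (((n Y : ℝ) - N) * a + c Y) := by
      funext a
      rw [← Real.exp_add]
      ring_nf
    rw [hfun]
    rcases eq_or_lt_of_le (Finset.le_sup (f := n) hYS) with heq | hlt
    · have hEq2 : n Y = N := heq
      have hconst : (fun a : ℝ => Real.exp (((n Y : ℝ) - N) * a + c Y))
          = fun _ : ℝ => Real.exp (c Y) := by
        funext a; rw [hEq2]; ring_nf
      have hlY : lim Y = Real.exp (c Y) := by simp [hlimdef, hEq2]
      rw [hconst, hlY]
      exact tendsto_const_nhds
    · have hk : ((n Y : ℝ) - N) < 0 := by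
        have : (n Y : ℝ) < N := by exact_mod_cast hlt
        linarith
      have hne : n Y ≠ N := Nat.ne_of_lt hlt
      simp only [hlimdef, if_neg hne]
      have h1 : Tendsto (fun a : ℝ => ((n Y : ℝ) - N) * a + c Y) atTop atBot := by
        apply Filter.tendsto_atBot_add_const_right
        have h2 : Tendsto (fun a : ℝ => (N - (n Y : ℝ)) * a) atTop atTop := by
          apply Filter.Tendsto.const_mul_atTop (by linarith) tendsto_id
        have h3 : Tendsto (fun a : ℝ => -((N - (n Y : ℝ)) * a)) atTop atBot :=
          tendsto_neg_atTop_atBot.comp h2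
        convert h3 using 2 with a
        ring
      exact Real.tendsto_exp_atBot.comp h1
  -- rewrite the ratio
  have hWgt : ∀ Y ∈ S, ∀ a : ℝ, Wgt P Y a = Real.exp ((n Y : ℝ) * a + c Y) := by
    intro Y hYS a
    rw [Wgt, if_pos ((hmemS Y).1 hYS), hsum a Y]
  have hratio : ∀ a : ℝ, ratio P X a
      = (Wgt P X a * Real.exp (-(N : ℝ) * a)) /
        (∑ Y ∈ S, Wgt P Y a * Real.exp (-(N : ℝ) * a)) := by
    intro a
    rw [ratio, ← Finset.sum_mul, mul_div_mul_right _ _ (Real.exp_ne_zero _)]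
  set L : ℝ := if X ∈ SSM P then lim X else 0 with hL
  have hnum : Tendsto (fun a : ℝ => Wgt P X a * Real.exp (-(N : ℝ) * a)) atTop (nhds L) := by
    by_cases hX : X ∈ SSM P
    · have hXS : X ∈ S := (hmemS X).2 hX
      have := hlim X hXS
      rw [hL, if_pos hX]
      apply this.congr
      intro a
      rw [hWgt X hXS a]
    · have hzero : ∀ a : ℝ, Wgt P X a * Real.exp (-(N : ℝ) * a) = 0 := by
        intro a; rw [Wgt, if_neg hX, zero_mul]
      rw [hL, if_neg hX]
      exact tendsto_const_nhds.congr (fun a => (hzero a).symm)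
  have hden : Tendsto (fun a : ℝ => ∑ Y ∈ S, Wgt P Y a * Real.exp (-(N : ℝ) * a))
      atTop (nhds D) := by
    rw [hD]
    apply tendsto_finset_sum
    intro Y hYS
    exact (hlim Y hYS).congr (fun a => by rw [hWgt Y hYS a])
  refine ⟨L / D, ?_, ?_⟩
  · have := hnum.div hden (ne_of_gt hDpos)
    exact this.congr (fun a => (hratio a).symm)
  · rw [div_ne_zero_iff]
    constructor
    · rintro ⟨hLne, -⟩
      by_cases hX : X ∈ SSM P
      · refine ⟨hX, ?_⟩
        have hXS : X ∈ S := (hmemS X).2 hX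
        rw [hL, if_pos hX, hlimdef] at hLne
        by_cases hEq : n X = N
        · intro Y hY
          have h2 : n Y ≤ N := Finset.le_sup (f := n) ((hmemS Y).2 hY)
          show n Y ≤ n X
          rw [hEq]; exact h2
        · simp [hEq] at hLne
      · rw [hL, if_neg hX] at hLne; exact absurd rfl hLne
    · rintro ⟨hX, hmax⟩
      have hXS : X ∈ S := (hmemS X).2 hX
      have hEq : n X = N := by
        apply le_antisymm (Finset.le_sup (f := n) hXS)
        rw [hY0]
        exact hmax Y0 ((hmemS Y0).1 hY0S)
      refine ⟨?_, ne_of_gt hDpos⟩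
      rw [hL, if_pos hX, hlimdef]
      simp only [hEq, if_pos rfl]
      exact Real.exp_ne_zero _
end

section
/- Let Γ be a finite set of propositional formulas over a finite set of atoms, Ω a finite set of weak constraints, and Ω₀ ⊆ Ω its weak constraints at level 0. Let Π be the plingo program with hard formulas {α : F : F ∈ Γ}, soft integrity constraints {w : ¬¬F : (:~ F [w, 0]) ∈ Ω₀}, and weak constraints Ω \ Ω₀. Then OSM(Π) equals the set of optimal stable models of Γ ∪ (Ω \ Ω₀) (the level-0 constraints do not affect optimality), and for every X ∈ OSM(Π), P''_Π(X) = exp(Cost_Ω(X, 0)) / Σ_{Y ∈ OSM(Π)} exp(Cost_Ω(Y, 0)); i.e., reinterpreting the weak constraints at level 0 as soft integrity constraints makes the probability of an optimal stable model proportional to the exponential of its cost at level 0. -/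
open Filter

attribute [local instance] Classical.propDecidable

variable {At : Type}

/-- reinterpreting the weak constraints at level `0` as soft integrity
    constraints. `OSM(Π)` equals the optimal stable models of `Γ ∪ (Ω \ Ω₀)`, and the
    probability of each optimal stable model is proportional to the exponential of its
    cost at level `0`. -/
theorem plingo_level0_reinterpretation {At : Type} [Fintype At]
    (Γ : Finset (Formula At)) (Ω Ω0 : Finset (WeakConstraint At))
    (hΩ0 : Ω0 = Ω.filter (fun c => c.level = 0))
    (P : PlingoProgram At)
    (hP : P = ⟨Γ, Ω0.image (fun c => (c.weight, c.formula.neg.neg)), Ω \ Ω0⟩) :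
    OSM P = { X | OptStable ↑Γ (Ω \ Ω0) X } ∧
      ∀ X ∈ OSM P, Pr'' P X =
        Real.exp (Cost Ω X 0) /
          ∑ Y ∈ Finset.univ.filter (fun Y => Y ∈ OSM P), Real.exp (Cost Ω Y 0) := by
  subst hP hΩ0
  refine ⟨rfl, ?_⟩
  intro X hX
  have hsat : ∀ (Y : Finset At) (F : Formula At), F.neg.neg.sat Y ↔ F.sat Y := by
    intro Y F
    simp [Formula.neg, Formula.sat]
  have key : ∀ Y : Finset At,
      (∑ p ∈ ((Ω.filter (fun c => c.level = 0)).image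
        (fun c => (c.weight, c.formula.neg.neg))).filter (fun p => p.2.sat Y), p.1)
      = Cost Ω Y 0 := by
    intro Y
    rw [Finset.filter_image, Finset.sum_image]
    · unfold Cost
      rw [Finset.filter_filter]
      refine Finset.sum_congr (Finset.filter_congr ?_) (fun _ _ => rfl)
      intro c hc
      simp [hsat]
    · intro c hc c' hc' h
      simp only [Finset.mem_filter] at hc hc'
      have hw : c.weight = c'.weight := congrArg Prod.fst h
      have hf : c.formula.neg.neg = c'.formula.neg.neg := congrArg Prod.snd h
      simp only [Formula.neg, Formula.imp.injEq, and_true] at hf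
      obtain ⟨f, w, l⟩ := c
      obtain ⟨f', w', l'⟩ := c'
      simp_all
  have hW : ∀ Y : Finset At, Y ∈ OSM (⟨Γ, (Ω.filter (fun c => c.level = 0)).image
      (fun c => (c.weight, c.formula.neg.neg)), Ω \ Ω.filter (fun c => c.level = 0)⟩ :
      PlingoProgram At) →
      Wgt'' (⟨Γ, (Ω.filter (fun c => c.level = 0)).image
        (fun c => (c.weight, c.formula.neg.neg)), Ω \ Ω.filter (fun c => c.level = 0)⟩ :
        PlingoProgram At) Y = Real.exp (Cost Ω Y 0) := by
    intro Y hY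
    unfold Wgt''
    rw [if_pos hY]
    simp only [key]
  unfold Pr''
  rw [hW X hX]
  congr 1
  apply Finset.sum_congr rfl
  intro Y hY
  exact hW Y (Finset.mem_filter.mp hY).2
end
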